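/- Let κ₀ ∈ ℂ with κ₀ ≠ 0 and let R > 0. Then there exist N₀ ∈ ℕ and C > 0 such that for every integer n ≥ N₀: h_n^{(1)}(κ₀R) ≠ 0, z_n^{(1)}(κ₀R) ≠ 0, the function κ ↦ κ·h_n^{(1)}(κR)/z_n^{(1)}(κR) is complex differentiable at κ₀, and its derivative G_n′(κ₀) satisfies |G_n′(κ₀) + 1/n| ≤ C/n²; that is, (κ·h_n^{(1)}(κR)/z_n^{(1)}(κR))′ evaluated at κ₀ equals −1/n + O(1/n²) as n → ∞. -/

import Mathlib

set_option maxHeartbeats 1000000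

open Complex

/-- Spherical Hankel function of the first kind (Rayleigh closed form). -/
noncomputable def sphHankel (n : ℕ) (z : ℂ) : ℂ :=
  (-Complex.I) ^ (n + 1) * (Complex.exp (Complex.I * z) / z) *
    ∑ k ∈ Finset.range (n + 1),
      (Complex.I ^ k / ((Nat.factorial k : ℂ) * (2 * z) ^ k)) *
        ((Nat.factorial (n + k) : ℂ) / (Nat.factorial (n - k) : ℂ))

/-- `z_n^{(1)}(z) = h_n^{(1)}(z) + z * h_n^{(1)'}(z)`. -/
noncomputable def zfun (n : ℕ) (z : ℂ) : ℂ :=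
  sphHankel n z + z * deriv (sphHankel n) z

open Finset Metric

noncomputable def rr (n j : ℕ) : ℝ :=
  ∏ m ∈ Finset.range j, (2 * ((n : ℝ) - m)) / (2 * n - m)

lemma rr_zero (n : ℕ) : rr n 0 = 1 := by simp [rr]

lemma factor_nonneg {n m : ℕ} (h : m ≤ n) :
    0 ≤ (2 * ((n : ℝ) - m)) / (2 * n - m) ∧ (2 * ((n : ℝ) - m)) / (2 * n - m) ≤ 1 := by
  have hm' : (m : ℝ) ≤ n := by exact_mod_cast h
  have h0 : (0:ℝ) ≤ m := Nat.cast_nonneg m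
  rcases eq_or_lt_of_le hm' with he | hlt
  · constructor
    · rw [← he]; simp
    · rw [← he]; simp
  · have h2 : (0:ℝ) < 2 * n - m := by nlinarith
    constructor
    · apply div_nonneg (by linarith) h2.le
    · rw [div_le_one h2]; linarith

lemma rr_nonneg {n j : ℕ} (h : j ≤ n) : 0 ≤ rr n j :=
  Finset.prod_nonneg fun m hm =>
    (factor_nonneg ((Finset.mem_range.mp hm).trans_le h).le).1

lemma rr_le_one {n j : ℕ} (h : j ≤ n) : rr n j ≤ 1 :=
  Finset.prod_le_one
    (fun m hm => (factor_nonneg ((Finset.mem_range.mp hm).trans_le h).le).1)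
    (fun m hm => (factor_nonneg ((Finset.mem_range.mp hm).trans_le h).le).2)

lemma one_sub_rr_le {n j : ℕ} (h : j ≤ n) :
    1 - rr n j ≤ (j : ℝ) ^ 2 / (2 * n) := by
  induction j with
  | zero => simp [rr_zero]
  | succ j ih =>
    have hj : j ≤ n := Nat.le_of_succ_le h
    have hjn : (j : ℝ) < n := by exact_mod_cast h
    have hn0 : (0:ℝ) < n := lt_of_le_of_lt (Nat.cast_nonneg j) hjn
    have hj0 : (0:ℝ) ≤ j := Nat.cast_nonneg j
    have ihj := ih hj
    set q : ℝ := (2 * ((n : ℝ) - j)) / (2 * n - j) with hqdef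
    have hq := factor_nonneg hj
    have hq0 : (0:ℝ) < 2 * n - j := by nlinarith
    have h1q : 1 - q = j / (2 * n - j) := by
      rw [hqdef]; field_simp; ring
    have h1q' : 1 - q ≤ j / n := by
      rw [h1q]
      apply div_le_div_of_nonneg_left hj0 hn0
      linarith
    have hprod : rr n (j+1) = rr n j * q := by
      rw [rr, Finset.prod_range_succ, ← rr]
    have hr0 := rr_nonneg hj
    have hr1 := rr_le_one hj
    have step : 1 - rr n (j+1) ≤ (1 - rr n j) + (1 - q) := by
      rw [hprod]; nlinarith
    have : ((j:ℝ)^2) / (2*n) + (j:ℝ)/n ≤ ((j:ℝ)+1)^2 / (2*n) := by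
      rw [div_add_div _ _ (by positivity) (by positivity), div_le_div_iff₀ (by positivity) (by positivity)]
      ring_nf
      nlinarith
    push_cast
    linarith

lemma rr_eq {n j : ℕ} (h : j ≤ n) :
    rr n j = (2:ℝ)^j * (Nat.factorial n) * (Nat.factorial (2*n - j)) /
      ((Nat.factorial (n - j)) * (Nat.factorial (2*n))) := by
  induction j with
  | zero =>
    simp [rr_zero]
    rw [eq_div_iff (by positivity)]
    ring
  | succ j ih =>
    have hj : j ≤ n := Nat.le_of_succ_le h
    have ihj := ih hj
    have hprod : rr n (j+1) = rr n j * ((2 * ((n : ℝ) - j)) / (2 * n - j)) := by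
      rw [rr, Finset.prod_range_succ, ← rr]
    have e1 : 2*n - j = (2*n - (j+1)) + 1 := by omega
    have e2 : n - j = (n - (j+1)) + 1 := by omega
    have c1 : ((2*n - (j+1) : ℕ) : ℝ) + 1 = 2 * n - j := by
      have : (j:ℝ) + 1 ≤ 2*n := by
        have : j + 1 ≤ 2*n := by omega
        exact_mod_cast this
      push_cast [Nat.cast_sub (show j+1 ≤ 2*n by omega)]
      ring
    have c2 : ((n - (j+1) : ℕ) : ℝ) + 1 = n - j := by
      push_cast [Nat.cast_sub (show j+1 ≤ n by omega)]
      ring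
    have f1 : (Nat.factorial (2*n - j) : ℝ) = (Nat.factorial (2*n - (j+1))) * (2*n - (j:ℝ)) := by
      rw [e1, Nat.factorial_succ]
      push_cast
      rw [c1]; ring
    have f2 : (Nat.factorial (n - j) : ℝ) = (Nat.factorial (n - (j+1))) * ((n:ℝ) - j) := by
      rw [e2, Nat.factorial_succ]
      push_cast
      rw [c2]; ring
    rw [hprod, ihj]
    have hjn : (j : ℝ) < n := by exact_mod_cast h
    have hq0 : (0:ℝ) < 2 * n - j := by
      have hj0 : (0:ℝ) ≤ j := Nat.cast_nonneg j
      nlinarith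
    have hnj0 : (0:ℝ) < (n:ℝ) - j := by linarith
    have p1 : (0:ℝ) < (Nat.factorial (n - (j+1)) : ℝ) := by exact_mod_cast Nat.factorial_pos _
    have p2 : (0:ℝ) < (Nat.factorial (2*n) : ℝ) := by exact_mod_cast Nat.factorial_pos _
    rw [f1, f2]
    field_simp
    ring

noncomputable def VV (n : ℕ) (z : ℂ) : ℂ :=
  ∑ j ∈ Finset.range (n + 1), (-Complex.I * z) ^ j * (rr n j : ℝ) / (Nat.factorial j : ℂ)

noncomputable def FF (n : ℕ) (z : ℂ) : ℂ := Complex.exp (Complex.I * z) * VV n z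

noncomputable def aa (n : ℕ) : ℂ :=
  Complex.I ^ n * (Nat.factorial (2*n) : ℂ) / ((Nat.factorial n : ℂ) * 2 ^ n)

lemma aa_ne (n : ℕ) : aa n ≠ 0 := by
  unfold aa
  apply div_ne_zero
  · apply mul_ne_zero (pow_ne_zero _ I_ne_zero)
    exact_mod_cast (Nat.factorial_pos _).ne'
  · apply mul_ne_zero
    · exact_mod_cast (Nat.factorial_pos _).ne'
    · exact pow_ne_zero _ two_ne_zero

lemma VV_differentiable (n : ℕ) : Differentiable ℂ (VV n) := by
  unfold VV
  apply Differentiable.fun_sum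
  intro j _
  apply Differentiable.div_const
  apply Differentiable.mul_const
  exact (differentiable_id.const_mul _).pow j

lemma FF_differentiable (n : ℕ) : Differentiable ℂ (FF n) := by
  unfold FF
  exact ((differentiable_id.const_mul _).cexp).mul (VV_differentiable n)

lemma sphHankel_eq (n : ℕ) {z : ℂ} (hz : z ≠ 0) :
    sphHankel n z = (-Complex.I) ^ (n + 1) * aa n * FF n z / z ^ (n + 1) := by
  unfold sphHankel FF
  have key : ∀ k ∈ Finset.range (n+1),
      (Complex.I ^ k / ((Nat.factorial k : ℂ) * (2 * z) ^ k)) *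
        ((Nat.factorial (n + k) : ℂ) / (Nat.factorial (n - k) : ℂ))
      = aa n * ((-Complex.I * z) ^ (n - k) * (rr n (n-k) : ℝ) / (Nat.factorial (n-k) : ℂ)) / z ^ n := by
    intro k hk
    have hkn : k ≤ n := Nat.lt_succ_iff.mp (Finset.mem_range.mp hk)
    obtain ⟨j, hjk⟩ : ∃ j, n = k + j := ⟨n - k, by omega⟩
    subst hjk
    have e0 : k + j - k = j := by omega
    have e1 : 2*(k+j) - j = (k+j) + k := by omega
    have e2 : (k+j) - j = k := by omega
    rw [e0, rr_eq (by omega : j ≤ k + j), e1, e2]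
    unfold aa
    have hIinv : (-Complex.I * z) ^ j = (Complex.I ^ j)⁻¹ * z ^ j := by
      rw [mul_pow, ← Complex.inv_I, inv_pow]
    rw [hIinv]
    have hfk : (Nat.factorial k : ℂ) ≠ 0 := by exact_mod_cast (Nat.factorial_pos _).ne'
    have hfj : (Nat.factorial j : ℂ) ≠ 0 := by exact_mod_cast (Nat.factorial_pos _).ne'
    have hfn : (Nat.factorial (k+j) : ℂ) ≠ 0 := by exact_mod_cast (Nat.factorial_pos _).ne'
    have hf2n : (Nat.factorial (2*(k+j)) : ℂ) ≠ 0 := by exact_mod_cast (Nat.factorial_pos _).ne'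
    have hfnkk : (Nat.factorial ((k+j)+k) : ℂ) ≠ 0 := by exact_mod_cast (Nat.factorial_pos _).ne'
    have hIj : (Complex.I : ℂ) ^ j ≠ 0 := pow_ne_zero _ Complex.I_ne_zero
    have h2 : (2:ℂ) ≠ 0 := two_ne_zero
    push_cast
    rw [mul_pow]
    field_simp
    ring_nf
  rw [Finset.sum_congr rfl key, ← Finset.sum_div, ← Finset.mul_sum]
  have hrefl : ∑ k ∈ Finset.range (n+1),
      ((-Complex.I * z) ^ (n - k) * (rr n (n-k) : ℝ) / (Nat.factorial (n-k) : ℂ)) = VV n z := by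
    unfold VV
    have := Finset.sum_range_reflect
      (fun j => (-Complex.I * z) ^ j * (rr n j : ℝ) / (Nat.factorial j : ℂ)) (n+1)
    simpa using this
  rw [hrefl]
  field_simp
  ring

lemma exp_tail_bound (x : ℂ) (m : ℕ) :
    ‖Complex.exp x - ∑ j ∈ Finset.range m, x ^ j / (Nat.factorial j : ℂ)‖ ≤
      ‖x‖ ^ m / (Nat.factorial m : ℝ) * Real.exp ‖x‖ := by
  have hsum : Summable fun j : ℕ => x ^ j / (Nat.factorial j : ℂ) :=
    NormedSpace.expSeries_div_summable x
  have hexp : Complex.exp x = ∑' j : ℕ, x ^ j / (Nat.factorial j : ℂ) := by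
    rw [Complex.exp_eq_exp_ℂ, NormedSpace.exp_eq_tsum_div]
  have hsplit := hsum.sum_add_tsum_nat_add m
  have htail : Complex.exp x - ∑ j ∈ Finset.range m, x ^ j / (Nat.factorial j : ℂ)
      = ∑' j : ℕ, x ^ (j + m) / (Nat.factorial (j + m) : ℂ) := by
    rw [hexp, ← hsplit]; ring
  rw [htail]
  have hb : ∀ j : ℕ, ‖x ^ (j + m) / (Nat.factorial (j + m) : ℂ)‖ ≤
      ‖x‖ ^ m / (Nat.factorial m : ℝ) * (‖x‖ ^ j / (Nat.factorial j : ℝ)) := by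
    intro j
    rw [norm_div, norm_pow]
    have : ‖((Nat.factorial (j+m) : ℂ))‖ = (Nat.factorial (j+m) : ℝ) := by
      simp
    rw [this]
    have hfle : (Nat.factorial m : ℝ) * (Nat.factorial j : ℝ) ≤ (Nat.factorial (j+m) : ℝ) := by
      have := Nat.factorial_mul_factorial_dvd_factorial_add j m
      have hle : Nat.factorial j * Nat.factorial m ≤ Nat.factorial (j + m) :=
        Nat.le_of_dvd (Nat.factorial_pos _) this
      exact_mod_cast by linarith [hle]
    rw [pow_add]
    rw [div_le_iff₀ (by positivity)]
    have h1 : ‖x‖ ^ j * ‖x‖ ^ m ≥ 0 := by positivity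
    calc ‖x‖ ^ j * ‖x‖ ^ m = (‖x‖ ^ m * ‖x‖ ^ j) := by ring
    _ ≤ ‖x‖ ^ m / (Nat.factorial m : ℝ) * (‖x‖ ^ j / (Nat.factorial j : ℝ)) *
          ((Nat.factorial m : ℝ) * (Nat.factorial j : ℝ)) := by
        have hm0 : (0:ℝ) < (Nat.factorial m : ℝ) := by exact_mod_cast Nat.factorial_pos m
        have hj0 : (0:ℝ) < (Nat.factorial j : ℝ) := by exact_mod_cast Nat.factorial_pos j
        rw [div_mul_div_comm, div_mul_eq_mul_div,
          mul_div_assoc, div_self (by positivity : ((Nat.factorial m : ℝ) * (Nat.factorial j : ℝ)) ≠ 0), mul_one]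
    _ ≤ _ := by
        apply mul_le_mul_of_nonneg_left hfle (by positivity)
  have hsum2 : Summable fun j : ℕ => ‖x‖ ^ m / (Nat.factorial m : ℝ) * (‖x‖ ^ j / (Nat.factorial j : ℝ)) :=
    (NormedSpace.expSeries_div_summable ‖x‖).mul_left _
  calc ‖∑' j : ℕ, x ^ (j + m) / (Nat.factorial (j + m) : ℂ)‖
      ≤ ∑' j : ℕ, ‖x ^ (j + m) / (Nat.factorial (j + m) : ℂ)‖ := by
        apply norm_tsum_le_tsum_norm
        apply Summable.of_nonneg_of_le (fun j => norm_nonneg _) hb hsum2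
    _ ≤ ∑' j : ℕ, ‖x‖ ^ m / (Nat.factorial m : ℝ) * (‖x‖ ^ j / (Nat.factorial j : ℝ)) := by
        apply Summable.tsum_le_tsum hb
        · apply Summable.of_nonneg_of_le (fun j => norm_nonneg _) hb hsum2
        · exact hsum2
    _ = ‖x‖ ^ m / (Nat.factorial m : ℝ) * ∑' j : ℕ, ‖x‖ ^ j / (Nat.factorial j : ℝ) := by
        rw [tsum_mul_left]
    _ = ‖x‖ ^ m / (Nat.factorial m : ℝ) * Real.exp ‖x‖ := by
        congr 1
        rw [Real.exp_eq_exp_ℝ, NormedSpace.exp_eq_tsum_div]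

lemma FF_bound (ρ : ℝ) (hρ : 0 ≤ ρ) : ∃ N : ℕ, 1 ≤ N ∧ ∀ n, N ≤ n → ∀ z : ℂ, ‖z‖ ≤ ρ →
    ‖FF n z - 1‖ ≤ Real.exp ρ * (Real.exp (4*ρ) + Real.exp ρ) / n := by
  -- eventually ρ^(n+1)/(n+1)! ≤ 1/n
  have htend : Filter.Tendsto (fun n : ℕ => ρ * (ρ ^ n / (Nat.factorial n : ℝ)))
      Filter.atTop (nhds 0) := by
    simpa using (FloorSemiring.tendsto_pow_div_factorial_atTop ρ).const_mul ρ
  have hev : ∀ᶠ n : ℕ in Filter.atTop, ρ * (ρ ^ n / (Nat.factorial n : ℝ)) ≤ 1 := by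
    exact htend.eventually_le_const (show (0:ℝ) < 1 by norm_num)
  obtain ⟨N₁, hN₁⟩ := Filter.eventually_atTop.mp hev
  refine ⟨max 1 N₁, le_max_left _ _, ?_⟩
  intro n hn z hz
  have hn1 : 1 ≤ n := le_trans (le_max_left 1 N₁) hn
  have hnN : N₁ ≤ n := le_trans (le_max_right 1 N₁) hn
  have hn0 : (0:ℝ) < n := by exact_mod_cast hn1
  set x : ℂ := -Complex.I * z with hxdef
  have hxn : ‖x‖ = ‖z‖ := by
    rw [hxdef, norm_mul]
    simp
  have hxρ : ‖x‖ ≤ ρ := hxn ▸ hz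
  have hexp1 : Complex.exp (Complex.I * z) * Complex.exp x = 1 := by
    rw [← Complex.exp_add, show Complex.I * z + -Complex.I * z = 0 by ring, Complex.exp_zero]
  have hFF : FF n z - 1 = Complex.exp (Complex.I * z) * (VV n z - Complex.exp x) := by
    rw [mul_sub, hexp1]; rfl
  have hnormexp : ‖Complex.exp (Complex.I * z)‖ ≤ Real.exp ρ := by
    rw [Complex.norm_exp]
    apply Real.exp_le_exp.mpr
    have h1 : (Complex.I * z).re = -z.im := by simp
    rw [h1]
    have := Complex.abs_im_le_norm z
    have := abs_le.mp (le_trans this hz)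
    linarith [this.1]
  -- main estimate
  have hsplit : VV n z - Complex.exp x =
      (∑ j ∈ Finset.range (n+1), x ^ j * (((rr n j : ℝ) : ℂ) - 1) / (Nat.factorial j : ℂ))
      - (Complex.exp x - ∑ j ∈ Finset.range (n+1), x ^ j / (Nat.factorial j : ℂ)) := by
    have hkey : (∑ j ∈ Finset.range (n+1), x ^ j * ((rr n j : ℝ) : ℂ) / (Nat.factorial j : ℂ))
        - (∑ j ∈ Finset.range (n+1), x ^ j / (Nat.factorial j : ℂ))
        = ∑ j ∈ Finset.range (n+1), x ^ j * (((rr n j : ℝ) : ℂ) - 1) / (Nat.factorial j : ℂ) := by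
      rw [← Finset.sum_sub_distrib]
      apply Finset.sum_congr rfl
      intro j _
      ring
    have hVV : VV n z = ∑ j ∈ Finset.range (n+1), x ^ j * ((rr n j : ℝ) : ℂ) / (Nat.factorial j : ℂ) := rfl
    rw [hVV]
    linear_combination hkey
  have hterm : ∀ j ∈ Finset.range (n+1),
      ‖x ^ j * (((rr n j : ℝ) : ℂ) - 1) / (Nat.factorial j : ℂ)‖ ≤
        (4*ρ) ^ j / (Nat.factorial j : ℝ) * (1/(2*n)) := by
    intro j hj
    have hjn : j ≤ n := Nat.lt_succ_iff.mp (Finset.mem_range.mp hj)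
    rw [norm_div, norm_mul, norm_pow]
    have h1 : ‖(((rr n j : ℝ) : ℂ) - 1)‖ = 1 - rr n j := by
      rw [show (((rr n j : ℝ) : ℂ) - 1) = (((rr n j - 1 : ℝ) : ℂ)) by push_cast; ring]
      rw [Complex.norm_real, Real.norm_eq_abs, abs_of_nonpos (by linarith [rr_le_one hjn])]
      ring
    have h2 : ‖((Nat.factorial j : ℂ))‖ = (Nat.factorial j : ℝ) := by simp
    rw [h1, h2]
    have hj2 : (j:ℝ)^2 ≤ 4 ^ j := by
      have : j ≤ 2 ^ j := (j.lt_two_pow_self).le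
      have h4 : (j:ℝ) ≤ 2 ^ j := by exact_mod_cast this
      have : (j:ℝ)^2 ≤ (2^j : ℝ)^2 := by
        apply pow_le_pow_left₀ (Nat.cast_nonneg j) h4
      calc (j:ℝ)^2 ≤ (2^j : ℝ)^2 := this
      _ = 4 ^ j := by rw [← pow_mul, show (4:ℝ) = 2^2 by norm_num, ← pow_mul]; ring_nf
    have hrr := one_sub_rr_le hjn
    have hfj : (0:ℝ) < (Nat.factorial j : ℝ) := by exact_mod_cast Nat.factorial_pos j
    have hxj : ‖x‖ ^ j ≤ ρ ^ j := pow_le_pow_left₀ (norm_nonneg x) hxρ j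
    have key : ‖x‖ ^ j * (1 - rr n j) ≤ (4*ρ)^j * (1/(2*(n:ℝ))) := by
      calc ‖x‖ ^ j * (1 - rr n j) ≤ ρ ^ j * ((j:ℝ)^2/(2*n)) := by
            apply mul_le_mul hxj hrr (by linarith [rr_le_one hjn]) (by positivity)
        _ = ((j:ℝ)^2) * ρ^j * (1/(2*n)) := by ring
        _ ≤ (4*ρ)^j * (1/(2*n)) := by
            rw [mul_pow]
            apply mul_le_mul_of_nonneg_right _ (by positivity)
            apply mul_le_mul_of_nonneg_right hj2 (by positivity)
    calc ‖x‖ ^ j * (1 - rr n j) / (Nat.factorial j : ℝ)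
        ≤ ((4*ρ)^j * (1/(2*(n:ℝ)))) / (Nat.factorial j : ℝ) := by
          exact div_le_div_of_nonneg_right key hfj.le |>.trans_eq rfl
      _ = (4*ρ) ^ j / (Nat.factorial j : ℝ) * (1/(2*(n:ℝ))) := by ring
  have hsum_bound : ‖∑ j ∈ Finset.range (n+1), x ^ j * (((rr n j : ℝ) : ℂ) - 1) / (Nat.factorial j : ℂ)‖
      ≤ Real.exp (4*ρ) * (1/(2*(n:ℝ))) := by
    calc ‖∑ j ∈ Finset.range (n+1), x ^ j * (((rr n j : ℝ) : ℂ) - 1) / (Nat.factorial j : ℂ)‖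
        ≤ ∑ j ∈ Finset.range (n+1), (4*ρ) ^ j / (Nat.factorial j : ℝ) * (1/(2*(n:ℝ))) :=
          norm_sum_le_of_le _ hterm
      _ = (∑ j ∈ Finset.range (n+1), (4*ρ) ^ j / (Nat.factorial j : ℝ)) * (1/(2*(n:ℝ))) := by
          rw [← Finset.sum_mul]
      _ ≤ Real.exp (4*ρ) * (1/(2*(n:ℝ))) := by
          apply mul_le_mul_of_nonneg_right (Real.sum_le_exp_of_nonneg (by positivity) (n+1))
            (by positivity)
  have htail : ‖Complex.exp x - ∑ j ∈ Finset.range (n+1), x ^ j / (Nat.factorial j : ℂ)‖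
      ≤ Real.exp ρ * (1/(n:ℝ)) := by
    have h1 := exp_tail_bound x (n+1)
    have hfpos : (0:ℝ) < ((n+1).factorial : ℝ) := by exact_mod_cast Nat.factorial_pos (n+1)
    have h2 : ‖x‖ ^ (n+1) / ((n+1).factorial : ℝ) * Real.exp ‖x‖
        ≤ ρ ^ (n+1) / ((n+1).factorial : ℝ) * Real.exp ρ := by
      apply mul_le_mul
      · apply div_le_div_of_nonneg_right (pow_le_pow_left₀ (norm_nonneg x) hxρ _) hfpos.le
      · exact Real.exp_le_exp.mpr hxρ
      · positivity
      · positivity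
    have h3 : ρ ^ (n+1) / ((n+1).factorial : ℝ) ≤ 1/(n:ℝ) := by
      have hfact : (((n+1).factorial : ℕ) : ℝ) = ((n:ℝ)+1) * (Nat.factorial n : ℝ) := by
        rw [Nat.factorial_succ]; push_cast; ring
      have hfn : (0:ℝ) < (Nat.factorial n : ℝ) := by exact_mod_cast Nat.factorial_pos n
      have hρn : ρ * ρ^n ≤ (Nat.factorial n : ℝ) := by
        have hle : ρ * ρ ^ n / (Nat.factorial n : ℝ) ≤ 1 := by
          calc ρ * ρ ^ n / (Nat.factorial n : ℝ) = ρ * (ρ^n / (Nat.factorial n : ℝ)) := by ring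
            _ ≤ 1 := hN₁ n hnN
        exact (div_le_one hfn).mp hle
      rw [hfact, pow_succ, div_le_div_iff₀ (by positivity) hn0]
      have hρρn : 0 ≤ ρ^n * ρ := by positivity
      nlinarith
    calc ‖Complex.exp x - ∑ j ∈ Finset.range (n+1), x ^ j / (Nat.factorial j : ℂ)‖
        ≤ ρ ^ (n+1) / ((n+1).factorial : ℝ) * Real.exp ρ := le_trans h1 h2
      _ ≤ 1/(n:ℝ) * Real.exp ρ := mul_le_mul_of_nonneg_right h3 (Real.exp_pos ρ).le
      _ = Real.exp ρ * (1/(n:ℝ)) := by ring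
  rw [hFF, norm_mul]
  have hmid : ‖VV n z - Complex.exp x‖ ≤ Real.exp (4*ρ) * (1/(2*(n:ℝ))) + Real.exp ρ * (1/(n:ℝ)) := by
    rw [hsplit]
    exact (norm_sub_le _ _).trans (add_le_add hsum_bound htail)
  calc ‖Complex.exp (Complex.I * z)‖ * ‖VV n z - Complex.exp x‖
      ≤ Real.exp ρ * (Real.exp (4*ρ) * (1/(2*(n:ℝ))) + Real.exp ρ * (1/(n:ℝ))) :=
        mul_le_mul hnormexp hmid (norm_nonneg _) (Real.exp_pos ρ).le
    _ ≤ Real.exp ρ * ((Real.exp (4*ρ) + Real.exp ρ) * (1/(n:ℝ))) := by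
        apply mul_le_mul_of_nonneg_left _ (Real.exp_pos ρ).le
        have h12 : (1:ℝ)/(2*(n:ℝ)) ≤ 1/(n:ℝ) := by
          apply div_le_div_of_nonneg_left one_pos.le hn0
          linarith
        have := mul_le_mul_of_nonneg_left h12 (Real.exp_pos (4*ρ)).le
        nlinarith [Real.exp_pos (4*ρ), Real.exp_pos ρ]
    _ = Real.exp ρ * (Real.exp (4*ρ) + Real.exp ρ) / (n:ℝ) := by ring

lemma cauchy_deriv_bound {f : ℂ → ℂ} (hf : Differentiable ℂ f) (c : ℂ) {B : ℝ}
    (hB : ∀ w ∈ Metric.sphere c 1, ‖f w‖ ≤ B) : ‖deriv f c‖ ≤ B := by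
  have := Complex.norm_deriv_le_of_forall_mem_sphere_norm_le one_pos
    (hf.diffContOnCl) hB
  simpa using this

lemma entire_deriv_differentiable {f : ℂ → ℂ} (hf : Differentiable ℂ f) :
    Differentiable ℂ (deriv f) := by
  have h1 : AnalyticOnNhd ℂ f Set.univ :=
    DifferentiableOn.analyticOnNhd hf.differentiableOn isOpen_univ
  have h2 := h1.deriv
  intro z
  exact (h2 z (Set.mem_univ z)).differentiableAt

lemma hasDerivAt_sphHankel (n : ℕ) {z : ℂ} (hz : z ≠ 0) :
    HasDerivAt (sphHankel n)
      ((-Complex.I) ^ (n + 1) * aa n *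
        (deriv (FF n) z - ((n:ℂ)+1) * FF n z / z) / z ^ (n + 1)) z := by
  have hF : HasDerivAt (fun w => (-Complex.I) ^ (n + 1) * aa n * FF n w)
      ((-Complex.I) ^ (n + 1) * aa n * deriv (FF n) z) z :=
    ((FF_differentiable n z).hasDerivAt).const_mul _
  have hpow : HasDerivAt (fun w : ℂ => w ^ (n+1)) (((n:ℂ)+1) * z ^ n) z := by
    simpa using hasDerivAt_pow (n+1) z
  have hdiv := hF.div hpow (pow_ne_zero _ hz)
  have heq : (fun w => (-Complex.I) ^ (n + 1) * aa n * FF n w / w ^ (n+1)) =ᶠ[nhds z]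
      sphHankel n := by
    filter_upwards [isOpen_compl_singleton.mem_nhds (by simpa using hz)] with w hw
    exact (sphHankel_eq n (by simpa using hw)).symm
  have := hdiv.congr_of_eventuallyEq heq.symm
  refine this.congr_deriv ?_
  have hzn : (z : ℂ) ^ n ≠ 0 := pow_ne_zero _ hz
  have hzn1 : (z : ℂ) ^ (n+1) ≠ 0 := pow_ne_zero _ hz
  field_simp
  ring

lemma zfun_eq (n : ℕ) {z : ℂ} (hz : z ≠ 0) :
    zfun n z = (-Complex.I) ^ (n + 1) * aa n *
      (deriv (FF n) z - (n:ℂ) * FF n z / z) / z ^ n := by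
  unfold zfun
  rw [(hasDerivAt_sphHankel n hz).deriv, sphHankel_eq n hz]
  have hzn : (z : ℂ) ^ n ≠ 0 := pow_ne_zero _ hz
  have hzn1 : (z : ℂ) ^ (n+1) ≠ 0 := pow_ne_zero _ hz
  field_simp
  ring

lemma Gfun_eq (n : ℕ) {κ : ℂ} (hκ : κ ≠ 0) {R : ℝ} (hR : R ≠ 0) :
    κ * sphHankel n (κ * R) / zfun n (κ * R) =
      FF n (κ * R) / ((R:ℂ) * (deriv (FF n) (κ * R) - (n:ℂ) * FF n (κ * R) / (κ * R))) := by
  have hRz : (R : ℂ) ≠ 0 := by exact_mod_cast hR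
  have hz : κ * (R:ℂ) ≠ 0 := mul_ne_zero hκ hRz
  rw [sphHankel_eq n hz, zfun_eq n hz]
  set E := deriv (FF n) (κ * R) - (n:ℂ) * FF n (κ * R) / (κ * R) with hE
  rcases eq_or_ne E 0 with h0 | h0
  · rw [h0]
    simp
  · have hc : (-Complex.I) ^ (n + 1) * aa n ≠ 0 :=
      mul_ne_zero (pow_ne_zero _ (neg_ne_zero.mpr Complex.I_ne_zero)) (aa_ne n)
    have hzn : (κ * (R:ℂ)) ^ n ≠ 0 := pow_ne_zero _ hz
    have hzn1 : (κ * (R:ℂ)) ^ (n+1) ≠ 0 := pow_ne_zero _ hz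
    have ha := aa_ne n
    field_simp
    ring

theorem dtn_coeff_U_deriv_asymptotic (κ₀ : ℂ) (hκ₀ : κ₀ ≠ 0) (R : ℝ) (hR : 0 < R) :
    ∃ (N₀ : ℕ) (C : ℝ), 0 < C ∧ ∀ n : ℕ, N₀ ≤ n →
      sphHankel n (κ₀ * R) ≠ 0 ∧ zfun n (κ₀ * R) ≠ 0 ∧
      DifferentiableAt ℂ
        (fun κ : ℂ => κ * sphHankel n (κ * R) / zfun n (κ * R)) κ₀ ∧
      ‖deriv (fun κ : ℂ => κ * sphHankel n (κ * R) / zfun n (κ * R)) κ₀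
          + 1 / (n : ℂ)‖ ≤ C / (n : ℝ) ^ 2 := by
  have hRz : (R : ℂ) ≠ 0 := by exact_mod_cast hR.ne'
  set z₀ : ℂ := κ₀ * R with hz₀def
  have hz₀ : z₀ ≠ 0 := mul_ne_zero hκ₀ hRz
  set Z : ℝ := ‖z₀‖ with hZdef
  have hZ : 0 < Z := norm_pos_iff.mpr hz₀
  set ρ : ℝ := Z + 2 with hρdef
  have hρ : 0 ≤ ρ := by positivity
  obtain ⟨N₁, hN₁1, hFFb⟩ := FF_bound ρ hρ
  set K : ℝ := Real.exp ρ * (Real.exp (4*ρ) + Real.exp ρ) with hKdef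
  have hK : 0 < K := by positivity
  set C₁ : ℝ := 2*K^2 + 3*K/2 + 3*K/Z with hC₁def
  have hC₁ : 0 < C₁ := by positivity
  refine ⟨max N₁ (max (⌈2*K⌉₊ + 1) (⌈4*K*Z⌉₊ + 1)), 16*Z^2*C₁ + 1, by positivity, ?_⟩
  intro n hn
  have hnN₁ : N₁ ≤ n := le_trans (le_max_left _ _) hn
  have hn2K : 2*K ≤ n := by
    have h1 : ⌈2*K⌉₊ + 1 ≤ n := le_trans ((le_max_left _ _).trans (le_max_right _ _)) hn
    calc (2*K : ℝ) ≤ ⌈2*K⌉₊ := Nat.le_ceil _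
      _ ≤ n := by exact_mod_cast le_trans (Nat.le_succ _) h1
  have hn4KZ : 4*K*Z ≤ n := by
    have h1 : ⌈4*K*Z⌉₊ + 1 ≤ n := le_trans ((le_max_right _ _).trans (le_max_right _ _)) hn
    calc (4*K*Z : ℝ) ≤ ⌈4*K*Z⌉₊ := Nat.le_ceil _
      _ ≤ n := by exact_mod_cast le_trans (Nat.le_succ _) h1
  have hn1 : 1 ≤ n := le_trans hN₁1 hnN₁
  have hn0 : (0:ℝ) < n := by exact_mod_cast hn1
  have hn1' : (1:ℝ) ≤ n := by exact_mod_cast hn1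
  have hnC : ((n:ℕ):ℂ) ≠ 0 := Nat.cast_ne_zero.mpr (by omega)
  -- the three delta bounds
  set p : ℂ := FF n z₀ with hpdef
  set q : ℂ := deriv (FF n) z₀ with hqdef
  set s : ℂ := deriv (deriv (FF n)) z₀ with hsdef
  have hb0 : ‖p - 1‖ ≤ K / n := by
    apply hFFb n hnN₁
    rw [hρdef]; linarith [le_refl Z]
  have hsphere_bound : ∀ c : ℂ, ‖c - z₀‖ ≤ 1 → ∀ w ∈ Metric.sphere c 1, ‖FF n w - 1‖ ≤ K / n := by
    intro c hc w hw
    apply hFFb n hnN₁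
    have h1 : ‖w - c‖ = 1 := by simpa [Metric.mem_sphere, dist_eq_norm] using hw
    calc ‖w‖ = ‖(w - c) + (c - z₀) + z₀‖ := by ring_nf
      _ ≤ ‖w - c‖ + ‖c - z₀‖ + ‖z₀‖ := by
          exact (norm_add_le _ _).trans (by gcongr; exact norm_add_le _ _)
      _ ≤ 1 + 1 + Z := by gcongr <;> simp [h1, hc]
      _ = ρ := by rw [hρdef]; ring
  have hderiv_bound : ∀ c : ℂ, ‖c - z₀‖ ≤ 1 → ‖deriv (FF n) c‖ ≤ K / n := by
    intro c hc
    have hdiff : Differentiable ℂ (fun z => FF n z - 1) := (FF_differentiable n).sub_const 1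
    have := cauchy_deriv_bound hdiff c (fun w hw => hsphere_bound c hc w hw)
    rwa [deriv_sub_const] at this
  have hb1 : ‖q‖ ≤ K / n := hderiv_bound z₀ (by simp)
  have hb2 : ‖s‖ ≤ K / n := by
    apply cauchy_deriv_bound (entire_deriv_differentiable (FF_differentiable n)) z₀
    intro w hw
    apply hderiv_bound w
    simp only [Metric.mem_sphere, dist_eq_norm] at hw
    exact hw.le
  -- basic consequences
  have hKn : K / n ≤ 1/2 := by
    rw [div_le_iff₀ hn0]; linarith
  have hp_lb : (1:ℝ)/2 ≤ ‖p‖ := by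
    have := norm_sub_norm_le p 1
    have h1 : ‖(1:ℂ)‖ = 1 := by simp
    have h2 : ‖(1:ℂ)‖ - ‖p - 1‖ ≤ ‖p‖ := by
      calc ‖(1:ℂ)‖ - ‖p - 1‖ ≤ ‖(1:ℂ) - (1 - p)‖ := by
            have := norm_sub_norm_le (1:ℂ) (1 - p)
            simpa [show (1:ℂ) - (1-p) = p by ring, norm_sub_rev] using this
        _ = ‖p‖ := by norm_num
    rw [h1] at h2
    linarith [hb0.trans hKn]
  have hp_ub : ‖p‖ ≤ 3/2 := by
    calc ‖p‖ = ‖(p - 1) + 1‖ := by ring_nf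
      _ ≤ ‖p - 1‖ + 1 := by simpa using norm_add_le (p-1) 1
      _ ≤ 3/2 := by linarith [hb0.trans hKn]
  have hp_ne : p ≠ 0 := by
    intro h; rw [h] at hp_lb; simp at hp_lb; linarith
  set D : ℂ := q - (n:ℂ) * p / z₀ with hDdef
  have hD_lb : (n:ℝ)/(4*Z) ≤ ‖D‖ := by
    have h1 : ‖(n:ℂ) * p / z₀‖ = n * ‖p‖ / Z := by
      rw [norm_div, norm_mul]
      simp [hZdef]
    have h2 : (n:ℝ)/(2*Z) ≤ ‖(n:ℂ) * p / z₀‖ := by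
      rw [h1]
      rw [div_le_div_iff₀ (by positivity) (by positivity)]
      nlinarith [mul_le_mul_of_nonneg_left hp_lb (show (0:ℝ) ≤ 2*(n:ℝ)*Z by positivity)]
    have h3 : ‖D‖ ≥ ‖(n:ℂ) * p / z₀‖ - ‖q‖ := by
      rw [hDdef]
      calc ‖q - (n:ℂ)*p/z₀‖ = ‖(n:ℂ)*p/z₀ - q‖ := norm_sub_rev _ _
        _ ≥ ‖(n:ℂ)*p/z₀‖ - ‖q‖ := norm_sub_norm_le _ _
    have h4 : K/n ≤ n/(4*Z) := by
      rw [div_le_div_iff₀ hn0 (by positivity)]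
      nlinarith
    have h5 : (n:ℝ)/(2*Z) - n/(4*Z) = n/(4*Z) := by field_simp; ring
    linarith [hb1]
  have hD_pos : (0:ℝ) < ‖D‖ := lt_of_lt_of_le (by positivity) hD_lb
  have hD_ne : D ≠ 0 := norm_pos_iff.mp hD_pos
  -- conclusion 1 and 2
  have hc : (-Complex.I) ^ (n + 1) * aa n ≠ 0 :=
    mul_ne_zero (pow_ne_zero _ (neg_ne_zero.mpr Complex.I_ne_zero)) (aa_ne n)
  have hzn : z₀ ^ n ≠ 0 := pow_ne_zero _ hz₀
  have hzn1 : z₀ ^ (n+1) ≠ 0 := pow_ne_zero _ hz₀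
  have hsph_ne : sphHankel n z₀ ≠ 0 := by
    rw [sphHankel_eq n hz₀]
    exact div_ne_zero (mul_ne_zero hc hp_ne) hzn1
  have hzfun_ne : zfun n z₀ ≠ 0 := by
    rw [zfun_eq n hz₀]
    exact div_ne_zero (mul_ne_zero hc hD_ne) hzn
  -- derivative computation
  have hFd : HasDerivAt (fun κ : ℂ => FF n (κ * (R:ℂ))) (q * (R:ℂ)) κ₀ := by
    have h1 : HasDerivAt (FF n) q z₀ := ((FF_differentiable n) z₀).hasDerivAt
    have h2 : HasDerivAt (fun κ : ℂ => κ * (R:ℂ)) (R:ℂ) κ₀ := hasDerivAt_mul_const _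
    exact h1.comp κ₀ h2
  have hqd : HasDerivAt (fun κ : ℂ => deriv (FF n) (κ * (R:ℂ))) (s * (R:ℂ)) κ₀ := by
    have h1 : HasDerivAt (deriv (FF n)) s z₀ :=
      ((entire_deriv_differentiable (FF_differentiable n)) z₀).hasDerivAt
    have h2 : HasDerivAt (fun κ : ℂ => κ * (R:ℂ)) (R:ℂ) κ₀ := hasDerivAt_mul_const _
    exact h1.comp κ₀ h2
  have hdiv3 : HasDerivAt (fun κ : ℂ => (n:ℂ) * FF n (κ * (R:ℂ)) / (κ * (R:ℂ)))
      (((n:ℂ) * (q * (R:ℂ)) * z₀ - (n:ℂ) * p * (R:ℂ)) / z₀ ^ 2) κ₀ :=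
    (hFd.const_mul (n:ℂ)).div (hasDerivAt_mul_const (R:ℂ)) hz₀
  have hden : HasDerivAt
      (fun κ : ℂ => (R:ℂ) * (deriv (FF n) (κ * (R:ℂ)) - (n:ℂ) * FF n (κ * (R:ℂ)) / (κ * (R:ℂ))))
      ((R:ℂ) * (s * (R:ℂ) - ((n:ℂ) * (q * (R:ℂ)) * z₀ - (n:ℂ) * p * (R:ℂ)) / z₀ ^ 2)) κ₀ :=
    (hqd.sub hdiv3).const_mul _
  have hden_ne : (R:ℂ) * (deriv (FF n) (κ₀ * (R:ℂ)) - (n:ℂ) * FF n (κ₀ * (R:ℂ)) / (κ₀ * (R:ℂ)))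
      ≠ 0 := mul_ne_zero hRz hD_ne
  have hΦ : HasDerivAt
      (fun κ : ℂ => FF n (κ * (R:ℂ)) /
        ((R:ℂ) * (deriv (FF n) (κ * (R:ℂ)) - (n:ℂ) * FF n (κ * (R:ℂ)) / (κ * (R:ℂ)))))
      ((q * (R:ℂ) * ((R:ℂ) * D) -
          p * ((R:ℂ) * (s * (R:ℂ) - ((n:ℂ) * (q * (R:ℂ)) * z₀ - (n:ℂ) * p * (R:ℂ)) / z₀ ^ 2)))
        / ((R:ℂ) * D) ^ 2) κ₀ :=
    hFd.div hden hden_ne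
  have heq : (fun κ : ℂ => κ * sphHankel n (κ * (R:ℂ)) / zfun n (κ * (R:ℂ)))
      =ᶠ[nhds κ₀] (fun κ : ℂ => FF n (κ * (R:ℂ)) /
        ((R:ℂ) * (deriv (FF n) (κ * (R:ℂ)) - (n:ℂ) * FF n (κ * (R:ℂ)) / (κ * (R:ℂ))))) := by
    filter_upwards [isOpen_compl_singleton.mem_nhds
      (by simpa using hκ₀ : κ₀ ∈ ({0}ᶜ : Set ℂ))] with κ hκ
    exact Gfun_eq n (by simpa using hκ) hR.ne'
  refine ⟨hsph_ne, hzfun_ne, ?_, ?_⟩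
  · exact (heq.differentiableAt_iff).mpr hΦ.differentiableAt
  · rw [heq.deriv_eq, hΦ.deriv]
    set u : ℂ := p / z₀ with hudef
    have hDu : D = q - (n:ℂ) * u := by rw [hDdef, hudef]; ring
    have hD2 : D ^ 2 ≠ 0 := pow_ne_zero 2 hD_ne
    have hval : (q * (R:ℂ) * ((R:ℂ) * D) -
          p * ((R:ℂ) * (s * (R:ℂ) - ((n:ℂ) * (q * (R:ℂ)) * z₀ - (n:ℂ) * p * (R:ℂ)) / z₀ ^ 2)))
        / ((R:ℂ) * D) ^ 2 + 1 / (n:ℂ)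
        = (((n:ℂ)+1) * q^2 - (n:ℂ) * p * s - 2 * (n:ℂ) * q * u) / ((n:ℂ) * D^2) := by
      have hval1 : (q * (R:ℂ) * ((R:ℂ) * D) -
          p * ((R:ℂ) * (s * (R:ℂ) - ((n:ℂ) * (q * (R:ℂ)) * z₀ - (n:ℂ) * p * (R:ℂ)) / z₀ ^ 2)))
        / ((R:ℂ) * D) ^ 2
        = (q * D - p * s + (n:ℂ) * q * u - (n:ℂ) * u^2) / D^2 := by
        rw [hudef]
        field_simp
        ring
      rw [hval1, div_add_div _ _ hD2 hnC,
        div_eq_div_iff (mul_ne_zero hD2 hnC) (mul_ne_zero hnC hD2), hDu]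
      ring
    rw [hval, norm_div]
    have hnormn : ‖((n:ℂ))‖ = (n:ℝ) := by simp
    have hnu : ‖u‖ = ‖p‖ / Z := by rw [hudef, norm_div, ← hZdef]
    have hq2 : ‖q‖^2 ≤ (K/(n:ℝ))^2 := pow_le_pow_left₀ (norm_nonneg q) hb1 2
    have e1 : ‖(((n:ℂ))+1) * q^2‖ ≤ 2*K^2 := by
      rw [norm_mul, norm_pow]
      have hnn : ‖((n:ℂ))+1‖ = (n:ℝ)+1 := by
        rw [show ((n:ℂ)+1) = ((((n:ℝ)+1 : ℝ)):ℂ) by push_cast; ring, Complex.norm_real]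
        exact abs_of_nonneg (by positivity)
      rw [hnn]
      calc ((n:ℝ)+1) * ‖q‖^2 ≤ ((n:ℝ)+1) * (K/(n:ℝ))^2 :=
            mul_le_mul_of_nonneg_left hq2 (by positivity)
        _ ≤ 2*K^2 := by
            rw [div_pow, ← mul_div_assoc, div_le_iff₀ (by positivity)]
            nlinarith [mul_nonneg (sq_nonneg K) (show (0:ℝ) ≤ 2*(n:ℝ)^2-(n:ℝ)-1 by nlinarith)]
    have e2 : ‖(n:ℂ) * p * s‖ ≤ 3*K/2 := by
      rw [norm_mul, norm_mul, hnormn]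
      have h1 : (n:ℝ) * ‖p‖ * ‖s‖ ≤ (n:ℝ) * (3/2) * (K/(n:ℝ)) :=
        mul_le_mul (mul_le_mul_of_nonneg_left hp_ub (by positivity)) hb2
          (norm_nonneg s) (by positivity)
      have h2 : (n:ℝ) * (3/2) * (K/(n:ℝ)) = 3*K/2 := by field_simp
      linarith
    have e3 : ‖2 * (n:ℂ) * q * u‖ ≤ 3*K/Z := by
      rw [norm_mul, norm_mul, norm_mul, hnormn, hnu]
      have h2 : ‖(2:ℂ)‖ = 2 := by simp
      rw [h2]
      have hub : ‖p‖/Z ≤ (3/2)/Z := by gcongr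
      have h1 : 2 * (n:ℝ) * ‖q‖ * (‖p‖/Z) ≤ 2 * (n:ℝ) * (K/(n:ℝ)) * ((3/2)/Z) := by
        apply mul_le_mul (mul_le_mul_of_nonneg_left hb1 (by positivity)) hub
          (by positivity) (by positivity)
      have h3 : 2 * (n:ℝ) * (K/(n:ℝ)) * ((3/2)/Z) = 3*K/Z := by field_simp
      linarith
    have hnum : ‖(((n:ℂ))+1) * q^2 - (n:ℂ) * p * s - 2 * (n:ℂ) * q * u‖ ≤ C₁ := by
      calc ‖(((n:ℂ))+1) * q^2 - (n:ℂ) * p * s - 2 * (n:ℂ) * q * u‖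
          ≤ ‖(((n:ℂ))+1) * q^2 - (n:ℂ) * p * s‖ + ‖2 * (n:ℂ) * q * u‖ := norm_sub_le _ _
        _ ≤ (‖(((n:ℂ))+1) * q^2‖ + ‖(n:ℂ) * p * s‖) + ‖2 * (n:ℂ) * q * u‖ :=
            add_le_add (norm_sub_le _ _) le_rfl
        _ ≤ (2*K^2 + 3*K/2) + 3*K/Z := add_le_add (add_le_add e1 e2) e3
        _ = C₁ := by rw [hC₁def]
    have hden2 : (n:ℝ)^3/(16*Z^2) ≤ ‖(n:ℂ) * D^2‖ := by
      rw [norm_mul, norm_pow, hnormn]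
      calc (n:ℝ)^3/(16*Z^2) = (n:ℝ) * ((n:ℝ)/(4*Z))^2 := by
            field_simp; ring
        _ ≤ (n:ℝ) * ‖D‖^2 :=
            mul_le_mul_of_nonneg_left (pow_le_pow_left₀ (by positivity) hD_lb 2) hn0.le
    calc ‖(((n:ℂ))+1) * q^2 - (n:ℂ) * p * s - 2 * (n:ℂ) * q * u‖ / ‖(n:ℂ) * D^2‖
        ≤ C₁ / ((n:ℝ)^3/(16*Z^2)) := div_le_div₀ hC₁.le hnum (by positivity) hden2
      _ = 16*Z^2*C₁ / (n:ℝ)^3 := by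
          rw [div_div_eq_mul_div]
          ring_nf
      _ ≤ (16*Z^2*C₁ + 1) / (n:ℝ)^2 := by
          rw [div_le_div_iff₀ (by positivity) (by positivity)]
          have h23 : (n:ℝ)^2 ≤ (n:ℝ)^3 := by nlinarith
          have hZC : (0:ℝ) ≤ 16*Z^2*C₁ := by positivity
          nlinarith [mul_le_mul_of_nonneg_left h23 hZC, pow_pos hn0 3]
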